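/- arXiv:2410.01537 — 2 statements merged into one kernel-verified Lean document; each statement's English description precedes it below -/
import Mathlib

section
/- Assume d ≥ 1, L ≥ 1, γ > 0, λ > 0. There exists ᾱ > 0 such that for every step size α with 0 < α ≤ ᾱ, the PGD map g_α is differentiable at every point of [−1, 1]² and its Jacobian (derivative) at every point of [−1, 1]² is invertible. -/
open MeasureTheory ProbabilityTheory Real Filter

noncomputable def erf (u : ℝ) : ℝ := 2 / Real.sqrt Real.pi * ∫ r in (0:ℝ)..u, Real.exp (-r ^ 2)

noncomputable def zeta (t s : ℝ) : ℝ := ∫ g, erf (t + g) ^ 2 ∂(gaussianReal 0 s.toNNReal)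

/-- The reduced risk `R(κ, ν)` on the invariant manifold. -/
noncomputable def Rred (d L : ℕ) (γ lam ε : ℝ) (κ ν : ℝ) : ℝ :=
  γ ^ 2 - 2 * γ ^ 2 * ν * erf (lam * Real.sqrt ((d : ℝ) / 2) * κ /
      Real.sqrt (1 + 2 * lam ^ 2 * γ ^ 2))
    + γ ^ 2 * zeta (lam * Real.sqrt ((d : ℝ) / 2) * κ) (lam ^ 2 * γ ^ 2)
    + ((L : ℝ) - 1) * zeta 0 (lam ^ 2) + ε ^ 2

/-- Partial derivative `∂κR` of the reduced risk with respect to its first argument. -/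
noncomputable def dkR (d L : ℕ) (γ lam ε : ℝ) (κ ν : ℝ) : ℝ :=
  deriv (fun x => Rred d L γ lam ε x ν) κ

/-- Partial derivative `∂νR` of the reduced risk with respect to its second argument. -/
noncomputable def dvR (d L : ℕ) (γ lam ε : ℝ) (κ ν : ℝ) : ℝ :=
  deriv (fun y => Rred d L γ lam ε κ y) ν

/-- The PGD map `g_α`. -/
noncomputable def pgd (d L : ℕ) (γ lam ε α : ℝ) (p : ℝ × ℝ) : ℝ × ℝ :=
  ((p.1 - α * dkR d L γ lam ε p.1 p.2 * (1 - p.1 ^ 2)) /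
      Real.sqrt (1 + α ^ 2 * (dkR d L γ lam ε p.1 p.2) ^ 2 * (1 - p.1 ^ 2)),
   (p.2 - α * dvR d L γ lam ε p.1 p.2 * (1 - p.2 ^ 2)) /
      Real.sqrt (1 + α ^ 2 * (dvR d L γ lam ε p.1 p.2) ^ 2 * (1 - p.2 ^ 2)))

/-- The square `[−1, 1]²`. -/
def sqIcc : Set (ℝ × ℝ) := {p | p.1 ∈ Set.Icc (-1 : ℝ) 1 ∧ p.2 ∈ Set.Icc (-1 : ℝ) 1}

noncomputable def E' (u : ℝ) : ℝ := 2 / Real.sqrt Real.pi * Real.exp (-u ^ 2)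
noncomputable def E'' (u : ℝ) : ℝ := 2 / Real.sqrt Real.pi * (Real.exp (-u ^ 2) * -(2 * u))

lemma cont_gexp : Continuous fun r : ℝ => Real.exp (-r ^ 2) :=
  Real.continuous_exp.comp ((continuous_pow 2).neg)

lemma hasDerivAt_erf (u : ℝ) : HasDerivAt erf (E' u) u := by
  unfold erf E'
  exact (intervalIntegral.integral_hasDerivAt_right
    (cont_gexp.intervalIntegrable 0 u)
    (cont_gexp.stronglyMeasurableAtFilter _ _)
    cont_gexp.continuousAt).const_mul _

lemma differentiable_erf : Differentiable ℝ erf := fun u => (hasDerivAt_erf u).differentiableAt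
lemma continuous_erf : Continuous erf := differentiable_erf.continuous

lemma abs_erf_le (u : ℝ) : |erf u| ≤ 2 := by
  have hpi : (0:ℝ) < Real.sqrt Real.pi := Real.sqrt_pos.mpr Real.pi_pos
  have hint : Integrable (fun r : ℝ => Real.exp (-r ^ 2)) := by
    have := integrable_exp_neg_mul_sq (one_pos (α := ℝ))
    simpa using this
  have h2 : |∫ r in (0:ℝ)..u, Real.exp (-r ^ 2)| ≤ Real.sqrt Real.pi := by
    rw [← Real.norm_eq_abs]
    calc ‖∫ r in (0:ℝ)..u, Real.exp (-r ^ 2)‖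
        ≤ ∫ r in Set.uIoc 0 u, ‖Real.exp (-r ^ 2)‖ :=
          intervalIntegral.norm_integral_le_integral_norm_uIoc
      _ = ∫ r in Set.uIoc 0 u, Real.exp (-r ^ 2) := by
          simp [Real.norm_eq_abs, abs_of_pos (Real.exp_pos _)]
      _ ≤ ∫ r, Real.exp (-r ^ 2) :=
          setIntegral_le_integral hint (Filter.Eventually.of_forall fun r => (Real.exp_pos _).le)
      _ = Real.sqrt Real.pi := by
          have := integral_gaussian 1
          simpa using this
  have : |erf u| = 2 / Real.sqrt Real.pi * |∫ r in (0:ℝ)..u, Real.exp (-r ^ 2)| := by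
    rw [erf, abs_mul, abs_of_pos (by positivity)]
  rw [this]
  calc 2 / Real.sqrt Real.pi * |∫ r in (0:ℝ)..u, Real.exp (-r ^ 2)|
      ≤ 2 / Real.sqrt Real.pi * Real.sqrt Real.pi := by
        exact mul_le_mul_of_nonneg_left h2 (by positivity)
    _ = 2 := div_mul_cancel₀ 2 hpi.ne'

lemma sqrtpi_ge_one : (1:ℝ) ≤ Real.sqrt Real.pi := by
  rw [show (1:ℝ) = Real.sqrt 1 by simp]
  exact Real.sqrt_le_sqrt (by linarith [Real.pi_gt_three])

lemma abs_E'_le (u : ℝ) : |E' u| ≤ 2 := by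
  have h1 : |E' u| = 2 / Real.sqrt Real.pi * Real.exp (-u ^ 2) := by
    rw [E', abs_mul, abs_of_pos (by positivity), abs_of_pos (Real.exp_pos _)]
  rw [h1]
  have h2 : Real.exp (-u ^ 2) ≤ 1 := Real.exp_le_one_iff.mpr (neg_nonpos.mpr (by positivity))
  have h3 : 2 / Real.sqrt Real.pi ≤ 2 := by
    rw [div_le_iff₀ (by positivity)]
    nlinarith [sqrtpi_ge_one]
  nlinarith [Real.exp_pos (-u^2), sqrtpi_ge_one]

lemma abs_E''_le (u : ℝ) : |E'' u| ≤ 2 := by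
  have key : |Real.exp (-u ^ 2) * -(2 * u)| ≤ 1 := by
    rw [abs_mul, abs_neg, abs_mul]
    have h1 : Real.exp (-u ^ 2) = (Real.exp (u ^ 2))⁻¹ := by
      rw [← Real.exp_neg]
    have h2 : 1 + u ^ 2 ≤ Real.exp (u ^ 2) := by
      linarith [Real.add_one_le_exp (u ^ 2)]
    have h3 : 2 * |u| ≤ 1 + u ^ 2 := by
      nlinarith [sq_nonneg (|u| - 1), sq_abs u]
    have h4 : 2 * |u| ≤ Real.exp (u ^ 2) := h3.trans h2
    rw [h1, abs_inv, abs_of_pos (Real.exp_pos _), abs_two]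
    calc (Real.exp (u ^ 2))⁻¹ * (2 * |u|) ≤ (Real.exp (u ^ 2))⁻¹ * Real.exp (u ^ 2) :=
          mul_le_mul_of_nonneg_left h4 (by positivity)
      _ = 1 := inv_mul_cancel₀ (Real.exp_pos _).ne'
  have : |E'' u| = 2 / Real.sqrt Real.pi * |Real.exp (-u ^ 2) * -(2 * u)| := by
    rw [E'', abs_mul, abs_of_pos (by positivity)]
  rw [this]
  have h3 : 2 / Real.sqrt Real.pi ≤ 2 := by
    rw [div_le_iff₀ (by positivity)]
    nlinarith [sqrtpi_ge_one]
  nlinarith [abs_nonneg (Real.exp (-u ^ 2) * -(2 * u)), (by positivity : (0:ℝ) < 2 / Real.sqrt Real.pi)]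

lemma hasDerivAt_E' (u : ℝ) : HasDerivAt E' (E'' u) u := by
  unfold E' E''
  have h : HasDerivAt (fun u : ℝ => Real.exp (-u ^ 2)) (Real.exp (-u ^ 2) * -(2 * u)) u := by
    have h1 : HasDerivAt (fun u : ℝ => -u ^ 2) (-(2 * u)) u := by
      simpa using (hasDerivAt_pow 2 u).fun_neg
    simpa using h1.exp
  exact h.const_mul _

lemma continuous_E' : Continuous E' := continuous_const.mul cont_gexp

lemma continuous_E'' : Continuous E'' := by
  unfold E''
  continuity

noncomputable def F1 (u : ℝ) : ℝ := 2 * erf u * E' u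
noncomputable def F2 (u : ℝ) : ℝ := 2 * (E' u * E' u + erf u * E'' u)

lemma hasDerivAt_erfsq (u : ℝ) : HasDerivAt (fun u => erf u ^ 2) (F1 u) u := by
  have := (hasDerivAt_erf u).fun_pow 2
  simpa [F1, pow_one, mul_comm, mul_assoc, mul_left_comm] using this

lemma hasDerivAt_F1 (u : ℝ) : HasDerivAt F1 (F2 u) u := by
  have := ((hasDerivAt_erf u).fun_mul (hasDerivAt_E' u)).const_mul 2
  unfold F1 F2
  rw [show (fun u => 2 * erf u * E' u) = fun y => 2 * (erf y * E' y) from funext fun x => by ring]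
  exact this

lemma abs_F1_le (u : ℝ) : ‖F1 u‖ ≤ 8 := by
  rw [Real.norm_eq_abs, F1, abs_mul, abs_mul, abs_two]
  nlinarith [abs_erf_le u, abs_E'_le u, abs_nonneg (erf u), abs_nonneg (E' u)]

lemma abs_F2_le (u : ℝ) : ‖F2 u‖ ≤ 16 := by
  rw [Real.norm_eq_abs, F2, abs_mul, abs_two]
  have h1 : |E' u * E' u + erf u * E'' u| ≤ 8 := by
    calc |E' u * E' u + erf u * E'' u| ≤ |E' u * E' u| + |erf u * E'' u| := abs_add_le _ _
      _ ≤ 8 := by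
        rw [abs_mul, abs_mul]
        nlinarith [abs_E'_le u, abs_erf_le u, abs_E''_le u, abs_nonneg (E' u),
          abs_nonneg (erf u), abs_nonneg (E'' u)]
  linarith

lemma continuous_F1 : Continuous F1 := (continuous_const.mul continuous_erf).mul continuous_E'
lemma continuous_F2 : Continuous F2 :=
  continuous_const.mul ((continuous_E'.mul continuous_E').add (continuous_erf.mul continuous_E''))

noncomputable def Z1 (s t : ℝ) : ℝ := ∫ g, F1 (t + g) ∂(gaussianReal 0 s.toNNReal)
noncomputable def Z2 (s t : ℝ) : ℝ := ∫ g, F2 (t + g) ∂(gaussianReal 0 s.toNNReal)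

lemma hasDerivAt_zeta (s t : ℝ) : HasDerivAt (fun t => zeta t s) (Z1 s t) t := by
  unfold zeta Z1
  have key := hasDerivAt_integral_of_dominated_loc_of_deriv_le
    (F := fun (x : ℝ) (g : ℝ) => erf (x + g) ^ 2)
    (F' := fun (x : ℝ) (g : ℝ) => F1 (x + g))
    (μ := gaussianReal 0 s.toNNReal) (x₀ := t) (bound := fun _ => 8)
    (Metric.ball_mem_nhds t one_pos)
    (Filter.Eventually.of_forall fun x =>
      (((continuous_erf.comp (continuous_const.add continuous_id)).pow 2)).aestronglyMeasurable)
    ?_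
    ((continuous_F1.comp (continuous_const.add continuous_id)).aestronglyMeasurable)
    (Filter.Eventually.of_forall fun g => fun x _ => abs_F1_le (x + g))
    (integrable_const 8)
    (Filter.Eventually.of_forall fun g => fun x _ => by
      simpa [Function.comp_def] using (hasDerivAt_erfsq (x + g)).comp x ((hasDerivAt_id x).add_const g))
  · exact key.2
  · refine Integrable.mono' (integrable_const 4)
      (((continuous_erf.comp (continuous_const.add continuous_id)).pow 2)).aestronglyMeasurable
      (Filter.Eventually.of_forall fun g => ?_)
    rw [Real.norm_eq_abs, abs_pow]
    nlinarith [abs_erf_le (t + g), abs_nonneg (erf (t + g))]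

lemma hasDerivAt_Z1 (s t : ℝ) : HasDerivAt (Z1 s) (Z2 s t) t := by
  unfold Z1 Z2
  have key := hasDerivAt_integral_of_dominated_loc_of_deriv_le
    (F := fun (x : ℝ) (g : ℝ) => F1 (x + g))
    (F' := fun (x : ℝ) (g : ℝ) => F2 (x + g))
    (μ := gaussianReal 0 s.toNNReal) (x₀ := t) (bound := fun _ => 16)
    (Metric.ball_mem_nhds t one_pos)
    (Filter.Eventually.of_forall fun x =>
      (continuous_F1.comp (continuous_const.add continuous_id)).aestronglyMeasurable)
    (Integrable.mono' (integrable_const 8)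
      (continuous_F1.comp (continuous_const.add continuous_id)).aestronglyMeasurable
      (Filter.Eventually.of_forall fun g => abs_F1_le (t + g)))
    ((continuous_F2.comp (continuous_const.add continuous_id)).aestronglyMeasurable)
    (Filter.Eventually.of_forall fun g => fun x _ => abs_F2_le (x + g))
    (integrable_const 16)
    (Filter.Eventually.of_forall fun g => fun x _ => by
      simpa [Function.comp_def] using (hasDerivAt_F1 (x + g)).comp x ((hasDerivAt_id x).add_const g))
  exact key.2

lemma continuous_Z2 (s : ℝ) : Continuous (Z2 s) := by
  unfold Z2
  exact continuous_of_dominated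
    (fun x => (continuous_F2.comp (continuous_const.add continuous_id)).aestronglyMeasurable)
    (fun x => Filter.Eventually.of_forall fun g => abs_F2_le (x + g))
    (integrable_const 16)
    (Filter.Eventually.of_forall fun g =>
      continuous_F2.comp (continuous_id.add continuous_const))

lemma contDiff_Z1 (s : ℝ) : ContDiff ℝ 1 (Z1 s) := by
  rw [contDiff_one_iff_deriv]
  refine ⟨fun t => (hasDerivAt_Z1 s t).differentiableAt, ?_⟩
  have : deriv (Z1 s) = Z2 s := funext fun t => (hasDerivAt_Z1 s t).deriv
  rw [this]
  exact continuous_Z2 s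

noncomputable def Kf (d : ℕ) (γ lam : ℝ) (p : ℝ × ℝ) : ℝ :=
  0 - 2 * γ ^ 2 * p.2 *
      (E' (lam * Real.sqrt ((d : ℝ) / 2) * p.1 / Real.sqrt (1 + 2 * lam ^ 2 * γ ^ 2)) *
        (lam * Real.sqrt ((d : ℝ) / 2) / Real.sqrt (1 + 2 * lam ^ 2 * γ ^ 2)))
    + γ ^ 2 * (Z1 (lam ^ 2 * γ ^ 2) (lam * Real.sqrt ((d : ℝ) / 2) * p.1) *
        (lam * Real.sqrt ((d : ℝ) / 2)))

noncomputable def Vf (d : ℕ) (γ lam : ℝ) (p : ℝ × ℝ) : ℝ :=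
  0 - 2 * γ ^ 2 * erf (lam * Real.sqrt ((d : ℝ) / 2) * p.1 /
      Real.sqrt (1 + 2 * lam ^ 2 * γ ^ 2))

lemma hasDerivAt_Rred_k (d L : ℕ) (γ lam ε : ℝ) (κ ν : ℝ) :
    HasDerivAt (fun x => Rred d L γ lam ε x ν) (Kf d γ lam (κ, ν)) κ := by
  set a := lam * Real.sqrt ((d : ℝ) / 2) with ha
  set s0 := Real.sqrt (1 + 2 * lam ^ 2 * γ ^ 2) with hs0
  have h1 : HasDerivAt (fun x : ℝ => a * x) a κ := by
    simpa using (hasDerivAt_id κ).const_mul a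
  have h2 : HasDerivAt (fun x : ℝ => a * x / s0) (a / s0) κ := h1.div_const s0
  have h3 : HasDerivAt (fun x : ℝ => erf (a * x / s0)) (E' (a * κ / s0) * (a / s0)) κ :=
    HasDerivAt.comp (h₂ := erf) κ (hasDerivAt_erf (a * κ / s0)) h2
  have h4 : HasDerivAt (fun x : ℝ => zeta (a * x) (lam ^ 2 * γ ^ 2))
      (Z1 (lam ^ 2 * γ ^ 2) (a * κ) * a) κ :=
    (hasDerivAt_zeta (lam ^ 2 * γ ^ 2) (a * κ)).comp κ h1
  have h5 := ((((hasDerivAt_const κ (γ ^ 2)).sub (h3.const_mul (2 * γ ^ 2 * ν))).add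
      (h4.const_mul (γ ^ 2))).add_const (((L : ℝ) - 1) * zeta 0 (lam ^ 2))).add_const (ε ^ 2)
  exact h5

lemma dkR_eq (d L : ℕ) (γ lam ε : ℝ) (κ ν : ℝ) :
    dkR d L γ lam ε κ ν = Kf d γ lam (κ, ν) :=
  (hasDerivAt_Rred_k d L γ lam ε κ ν).deriv

lemma hasDerivAt_Rred_v (d L : ℕ) (γ lam ε : ℝ) (κ ν : ℝ) :
    HasDerivAt (fun y => Rred d L γ lam ε κ y) (Vf d γ lam (κ, ν)) ν := by
  set a := lam * Real.sqrt ((d : ℝ) / 2) with ha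
  set s0 := Real.sqrt (1 + 2 * lam ^ 2 * γ ^ 2) with hs0
  have h1 : HasDerivAt (fun y : ℝ => 2 * γ ^ 2 * y * erf (a * κ / s0))
      (2 * γ ^ 2 * erf (a * κ / s0)) ν := by
    have := ((hasDerivAt_id ν).const_mul (2 * γ ^ 2)).mul_const (erf (a * κ / s0))
    simpa using this
  have h5 := ((((hasDerivAt_const ν (γ ^ 2)).sub h1).add_const
      (γ ^ 2 * zeta (a * κ) (lam ^ 2 * γ ^ 2))).add_const
      (((L : ℝ) - 1) * zeta 0 (lam ^ 2))).add_const (ε ^ 2)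
  exact h5

lemma dvR_eq (d L : ℕ) (γ lam ε : ℝ) (κ ν : ℝ) :
    dvR d L γ lam ε κ ν = Vf d γ lam (κ, ν) :=
  (hasDerivAt_Rred_v d L γ lam ε κ ν).deriv

lemma contDiff_E' : ContDiff ℝ 1 E' := by
  unfold E'
  exact contDiff_const.mul (Real.contDiff_exp.comp ((contDiff_id.pow 2).neg))

lemma contDiff_erf : ContDiff ℝ 1 erf := by
  rw [contDiff_one_iff_deriv]
  refine ⟨differentiable_erf, ?_⟩
  have : deriv erf = E' := funext fun u => (hasDerivAt_erf u).deriv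
  rw [this]
  exact continuous_E'

lemma contDiff_Kf (d : ℕ) (γ lam : ℝ) : ContDiff ℝ 1 (Kf d γ lam) := by
  unfold Kf
  refine ContDiff.add (ContDiff.sub contDiff_const ?_) (contDiff_const.mul ?_)
  · refine ContDiff.mul (contDiff_const.mul contDiff_snd) ?_
    exact ContDiff.mul
      (contDiff_E'.comp ((contDiff_const.mul contDiff_fst).div_const _)) contDiff_const
  · exact ContDiff.mul ((contDiff_Z1 _).comp (contDiff_const.mul contDiff_fst)) contDiff_const

lemma contDiff_Vf (d : ℕ) (γ lam : ℝ) : ContDiff ℝ 1 (Vf d γ lam) := by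
  unfold Vf
  exact ContDiff.sub contDiff_const
    (contDiff_const.mul (contDiff_erf.comp ((contDiff_const.mul contDiff_fst).div_const _)))

noncomputable def Phi (d : ℕ) (γ lam : ℝ) (q : ℝ × (ℝ × ℝ)) : ℝ × ℝ :=
  ((q.2.1 - q.1 * Kf d γ lam q.2 * (1 - q.2.1 ^ 2)) /
      Real.sqrt (1 + q.1 ^ 2 * (Kf d γ lam q.2) ^ 2 * (1 - q.2.1 ^ 2)),
   (q.2.2 - q.1 * Vf d γ lam q.2 * (1 - q.2.2 ^ 2)) /
      Real.sqrt (1 + q.1 ^ 2 * (Vf d γ lam q.2) ^ 2 * (1 - q.2.2 ^ 2)))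

lemma pgd_eq (d L : ℕ) (γ lam ε α : ℝ) (p : ℝ × ℝ) :
    pgd d L γ lam ε α p = Phi d γ lam (α, p) := by
  simp only [pgd, Phi, dkR_eq, dvR_eq]

def Oset (d : ℕ) (γ lam : ℝ) : Set (ℝ × (ℝ × ℝ)) :=
  {q | 0 < 1 + q.1 ^ 2 * (Kf d γ lam q.2) ^ 2 * (1 - q.2.1 ^ 2) ∧
       0 < 1 + q.1 ^ 2 * (Vf d γ lam q.2) ^ 2 * (1 - q.2.2 ^ 2)}

lemma isOpen_Oset (d : ℕ) (γ lam : ℝ) : IsOpen (Oset d γ lam) := by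
  have c1 : Continuous fun q : ℝ × (ℝ × ℝ) =>
      1 + q.1 ^ 2 * (Kf d γ lam q.2) ^ 2 * (1 - q.2.1 ^ 2) :=
    continuous_const.add (((continuous_fst.pow 2).mul
      (((contDiff_Kf d γ lam).continuous.comp continuous_snd).pow 2)).mul
      (continuous_const.sub ((continuous_fst.comp continuous_snd).pow 2)))
  have c2 : Continuous fun q : ℝ × (ℝ × ℝ) =>
      1 + q.1 ^ 2 * (Vf d γ lam q.2) ^ 2 * (1 - q.2.2 ^ 2) :=
    continuous_const.add (((continuous_fst.pow 2).mul
      (((contDiff_Vf d γ lam).continuous.comp continuous_snd).pow 2)).mul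
      (continuous_const.sub ((continuous_snd.comp continuous_snd).pow 2)))
  exact (isOpen_lt continuous_const c1).inter (isOpen_lt continuous_const c2)

lemma contDiffAt_Phi {d : ℕ} {γ lam : ℝ} {q : ℝ × (ℝ × ℝ)} (hq : q ∈ Oset d γ lam) :
    ContDiffAt ℝ 1 (Phi d γ lam) q := by
  obtain ⟨h1, h2⟩ := hq
  have cK : ContDiff ℝ 1 fun q : ℝ × (ℝ × ℝ) => Kf d γ lam q.2 :=
    (contDiff_Kf d γ lam).comp contDiff_snd
  have cV : ContDiff ℝ 1 fun q : ℝ × (ℝ × ℝ) => Vf d γ lam q.2 :=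
    (contDiff_Vf d γ lam).comp contDiff_snd
  have cx1 : ContDiff ℝ 1 fun q : ℝ × (ℝ × ℝ) => q.2.1 := contDiff_fst.comp contDiff_snd
  have cx2 : ContDiff ℝ 1 fun q : ℝ × (ℝ × ℝ) => q.2.2 := contDiff_snd.comp contDiff_snd
  have cA1 : ContDiff ℝ 1 fun q : ℝ × (ℝ × ℝ) =>
      q.2.1 - q.1 * Kf d γ lam q.2 * (1 - q.2.1 ^ 2) :=
    cx1.sub ((contDiff_fst.mul cK).mul (contDiff_const.sub (cx1.pow 2)))
  have cA2 : ContDiff ℝ 1 fun q : ℝ × (ℝ × ℝ) =>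
      q.2.2 - q.1 * Vf d γ lam q.2 * (1 - q.2.2 ^ 2) :=
    cx2.sub ((contDiff_fst.mul cV).mul (contDiff_const.sub (cx2.pow 2)))
  have cB1 : ContDiff ℝ 1 fun q : ℝ × (ℝ × ℝ) =>
      1 + q.1 ^ 2 * (Kf d γ lam q.2) ^ 2 * (1 - q.2.1 ^ 2) :=
    contDiff_const.add (((contDiff_fst.pow 2).mul (cK.pow 2)).mul
      (contDiff_const.sub (cx1.pow 2)))
  have cB2 : ContDiff ℝ 1 fun q : ℝ × (ℝ × ℝ) =>
      1 + q.1 ^ 2 * (Vf d γ lam q.2) ^ 2 * (1 - q.2.2 ^ 2) :=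
    contDiff_const.add (((contDiff_fst.pow 2).mul (cV.pow 2)).mul
      (contDiff_const.sub (cx2.pow 2)))
  have csq1 : ContDiffAt ℝ 1 (fun q : ℝ × (ℝ × ℝ) =>
      Real.sqrt (1 + q.1 ^ 2 * (Kf d γ lam q.2) ^ 2 * (1 - q.2.1 ^ 2))) q :=
    (Real.contDiffAt_sqrt h1.ne').comp q cB1.contDiffAt
  have csq2 : ContDiffAt ℝ 1 (fun q : ℝ × (ℝ × ℝ) =>
      Real.sqrt (1 + q.1 ^ 2 * (Vf d γ lam q.2) ^ 2 * (1 - q.2.2 ^ 2))) q :=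
    (Real.contDiffAt_sqrt h2.ne').comp q cB2.contDiffAt
  exact ContDiffAt.prodMk
    (cA1.contDiffAt.div csq1 (Real.sqrt_pos.mpr h1).ne')
    (cA2.contDiffAt.div csq2 (Real.sqrt_pos.mpr h2).ne')

lemma bijective_of_close_id (T : (ℝ × ℝ) →L[ℝ] (ℝ × ℝ))
    (h : ‖T - ContinuousLinearMap.id ℝ (ℝ × ℝ)‖ < 1) : Function.Bijective T := by
  have h1 : ‖(1 : (ℝ × ℝ) →L[ℝ] (ℝ × ℝ)) - T‖ < 1 := by
    rw [ContinuousLinearMap.one_def]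
    rwa [← norm_neg, neg_sub] at h
  set u := Units.oneSub _ h1 with hu
  have huv : (↑u : (ℝ × ℝ) →L[ℝ] (ℝ × ℝ)) = T := by
    simp [hu, Units.oneSub]
  have hleft : Function.LeftInverse (↑u⁻¹ : (ℝ × ℝ) →L[ℝ] (ℝ × ℝ)) T := fun x => by
    have h2 : ((↑u⁻¹ * ↑u : (ℝ × ℝ) →L[ℝ] (ℝ × ℝ))) x = x := by
      rw [u.inv_mul]; rfl
    rwa [ContinuousLinearMap.mul_apply, huv] at h2
  have hright : Function.RightInverse (↑u⁻¹ : (ℝ × ℝ) →L[ℝ] (ℝ × ℝ)) T := fun x => by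
    have h2 : ((↑u * ↑u⁻¹ : (ℝ × ℝ) →L[ℝ] (ℝ × ℝ))) x = x := by
      rw [u.mul_inv]; rfl
    rwa [ContinuousLinearMap.mul_apply, huv] at h2
  exact ⟨hleft.injective, hright.surjective⟩

lemma mem_Oset {d : ℕ} {γ lam : ℝ} (α : ℝ) (p : ℝ × ℝ) (hp : p ∈ sqIcc) :
    (α, p) ∈ Oset d γ lam := by
  obtain ⟨⟨hp1, hp1'⟩, hp2, hp2'⟩ := hp
  have h1 : p.1 ^ 2 ≤ 1 := by nlinarith
  have h2 : p.2 ^ 2 ≤ 1 := by nlinarith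
  constructor
  · have hn : (0:ℝ) ≤ α ^ 2 * (Kf d γ lam p) ^ 2 * (1 - p.1 ^ 2) :=
      mul_nonneg (mul_nonneg (sq_nonneg _) (sq_nonneg _)) (by linarith)
    show (0:ℝ) < 1 + α ^ 2 * (Kf d γ lam p) ^ 2 * (1 - p.1 ^ 2)
    linarith
  · have hn : (0:ℝ) ≤ α ^ 2 * (Vf d γ lam p) ^ 2 * (1 - p.2 ^ 2) :=
      mul_nonneg (mul_nonneg (sq_nonneg _) (sq_nonneg _)) (by linarith)
    show (0:ℝ) < 1 + α ^ 2 * (Vf d γ lam p) ^ 2 * (1 - p.2 ^ 2)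
    linarith

lemma isCompact_sqIcc : IsCompact sqIcc :=
  (isCompact_Icc.prod isCompact_Icc :
    IsCompact ((Set.Icc (-1:ℝ) 1) ×ˢ (Set.Icc (-1:ℝ) 1)))

/-- For small enough step size, the PGD map is differentiable at every point of
`[−1,1]²` with invertible Jacobian there. -/
theorem stmt13 (d L : ℕ) (hd : 1 ≤ d) (hL : 1 ≤ L) (γ lam ε : ℝ)
    (hγ : 0 < γ) (hlam : 0 < lam) (hε : 0 ≤ ε) :
    ∃ abar : ℝ, 0 < abar ∧ ∀ α : ℝ, 0 < α → α ≤ abar → ∀ p ∈ sqIcc,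
      DifferentiableAt ℝ (pgd d L γ lam ε α) p ∧
      Function.Bijective (fderiv ℝ (pgd d L γ lam ε α) p) := by
  classical
  set O := Oset d γ lam with hO
  have hOopen : IsOpen O := isOpen_Oset d γ lam
  set ι : (ℝ × ℝ) →L[ℝ] ℝ × (ℝ × ℝ) :=
    ((0 : (ℝ × ℝ) →L[ℝ] ℝ)).prod (ContinuousLinearMap.id ℝ (ℝ × ℝ)) with hι
  set J : ℝ × (ℝ × ℝ) → ((ℝ × ℝ) →L[ℝ] (ℝ × ℝ)) :=
    fun q => (fderiv ℝ (Phi d γ lam) q).comp ι with hJ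
  have hCD : ContDiffOn ℝ 1 (Phi d γ lam) O :=
    fun q hq => (contDiffAt_Phi hq).contDiffWithinAt
  have hfd : ContinuousOn (fderiv ℝ (Phi d γ lam)) O :=
    hCD.continuousOn_fderiv_of_isOpen hOopen le_rfl
  have hJcont : ContinuousOn J O := hfd.clm_comp continuousOn_const
  have hslice : ∀ q ∈ O, HasFDerivAt (fun p => Phi d γ lam (q.1, p)) (J q) q.2 := by
    intro q hq
    have h1 : HasFDerivAt (Phi d γ lam) (fderiv ℝ (Phi d γ lam) q) q :=
      ((contDiffAt_Phi hq).differentiableAt one_ne_zero).hasFDerivAt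
    have h2 : HasFDerivAt (fun p : ℝ × ℝ => (q.1, p)) ι q.2 :=
      HasFDerivAt.prodMk (hasFDerivAt_const q.1 q.2) (hasFDerivAt_id q.2)
    exact h1.comp q.2 h2
  have hmemO : ∀ (α : ℝ) (p : ℝ × ℝ), p ∈ sqIcc → (α, p) ∈ O := fun α p hp => mem_Oset α p hp
  have hJ0 : ∀ p : ℝ × ℝ, J (0, p) = ContinuousLinearMap.id ℝ (ℝ × ℝ) := by
    intro p
    have hmem : ((0:ℝ), p) ∈ O := by
      simp only [hO, Oset, Set.mem_setOf_eq]
      norm_num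
    have h1 := hslice _ hmem
    have h2 : (fun p' : ℝ × ℝ => Phi d γ lam ((((0:ℝ), p)).1, p')) = id := by
      funext p'
      simp [Phi]
    rw [h2] at h1
    exact h1.unique (hasFDerivAt_id p)
  set h : ℝ × (ℝ × ℝ) → ℝ := fun q => ‖J q - ContinuousLinearMap.id ℝ (ℝ × ℝ)‖ with hh
  have hhcont : ContinuousOn h O := (hJcont.sub continuousOn_const).norm
  set U := O ∩ h ⁻¹' Set.Iio 1 with hU
  have hUopen : IsOpen U := hhcont.isOpen_inter_preimage hOopen isOpen_Iio
  set K0 : Set (ℝ × (ℝ × ℝ)) := ({(0:ℝ)} : Set ℝ) ×ˢ sqIcc with hK0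
  have hK0cpt : IsCompact K0 := isCompact_singleton.prod isCompact_sqIcc
  have hK0U : K0 ⊆ U := by
    rintro ⟨α0, p⟩ ⟨hα0, hp⟩
    have hα0' : α0 = 0 := hα0
    subst hα0'
    refine ⟨hmemO 0 p hp, ?_⟩
    simp only [Set.mem_preimage, Set.mem_Iio, hh]
    rw [hJ0 p]
    simp
  obtain ⟨δ, hδpos, hδ⟩ := hK0cpt.exists_thickening_subset_open hUopen hK0U
  refine ⟨δ / 2, by positivity, ?_⟩
  intro α hα hαle p hp
  have hthick : (α, p) ∈ Metric.thickening δ K0 := by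
    rw [Metric.mem_thickening_iff]
    refine ⟨((0:ℝ), p), ⟨rfl, hp⟩, ?_⟩
    have hd : dist ((α, p) : ℝ × (ℝ × ℝ)) ((0:ℝ), p) = |α| := by
      simp [Prod.dist_eq, Real.dist_eq]
    rw [hd, abs_of_pos hα]
    linarith
  obtain ⟨hmem, hlt⟩ := hδ hthick
  have hsl := hslice _ hmem
  have hfun : pgd d L γ lam ε α = fun p' => Phi d γ lam (α, p') :=
    funext fun p' => pgd_eq d L γ lam ε α p'
  rw [hfun]
  refine ⟨hsl.differentiableAt, ?_⟩
  rw [hsl.fderiv]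
  exact bijective_of_close_id _ hlt
end

section
/- Let γ > 0 and t ∈ ℝ, and let G be a centered real Gaussian random variable with variance γ². Then E[ erf(t + G)·erf′(t + G) ] = (1/√(1 + 2γ²))·erf( t / √((1 + 4γ²)(1 + 2γ²)) )·erf′( t / √(1 + 2γ²) ), where erf′(u) = (2/√π)·exp(−u²). -/
open MeasureTheory ProbabilityTheory Real
open scoped NNReal ENNReal

/-- The derivative of `erf`: `erf′(u) = (2/√π)·exp(−u²)`. -/
noncomputable def erf' (u : ℝ) : ℝ := 2 / Real.sqrt Real.pi * Real.exp (-u ^ 2)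

lemma erf_eq_param (u : ℝ) :
    erf u = 2 / Real.sqrt Real.pi * ∫ s in (0:ℝ)..1, u * Real.exp (-(s*u) ^ 2) := by
  rcases eq_or_ne u 0 with rfl | hu
  · simp [erf]
  · rw [erf]
    congr 1
    rw [intervalIntegral.integral_const_mul (f := fun s => Real.exp (-(s*u)^2)) (r := u),
      intervalIntegral.integral_comp_mul_right (fun r => Real.exp (-r^2)) hu]
    simp [smul_eq_mul, mul_comm u]
    rw [mul_comm, ← mul_assoc, mul_inv_cancel₀ hu, one_mul]

lemma abs_mul_exp_neg_sq_le (u : ℝ) : |u| * Real.exp (-u^2) ≤ 1 := by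
  rw [Real.exp_neg, mul_inv_le_iff₀ (Real.exp_pos _), one_mul]
  have h := Real.add_one_le_exp (u^2)
  nlinarith [abs_nonneg u, sq_abs u, sq_nonneg (|u| - 1)]

lemma integral_self_mul_gauss {k : ℝ} : ∫ x : ℝ, x * Real.exp (-(k * x^2)) = 0 := by
  have h1 := integral_neg_eq_self (fun y : ℝ => y * Real.exp (-(k * y^2))) volume
  simp only [neg_sq, mul_neg, neg_mul, integral_neg] at h1
  linarith [h1]

lemma integral_shifted {k : ℝ} (hk : 0 < k) (c t : ℝ) :
    ∫ x : ℝ, (t + x) * Real.exp (-(k * (x + c)^2)) = (t - c) * Real.sqrt (Real.pi / k) := by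
  have h0 : ∫ x : ℝ, (t + x) * Real.exp (-(k * (x + c)^2))
      = ∫ x : ℝ, (fun y : ℝ => ((t - c) + y) * Real.exp (-(k * y^2))) (x + c) := by
    congr 1; ext x; ring_nf
  rw [h0, integral_add_right_eq_self (fun y : ℝ => ((t - c) + y) * Real.exp (-(k * y^2))) c]
  have hi1 : Integrable (fun y : ℝ => (t - c) * Real.exp (-(k * y^2))) := by
    simpa [neg_mul] using (integrable_exp_neg_mul_sq hk).const_mul (t - c)
  have hi2 : Integrable (fun y : ℝ => y * Real.exp (-(k * y^2))) := by
    simpa [neg_mul] using integrable_mul_exp_neg_mul_sq hk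
  have hsplit : ∫ y : ℝ, ((t - c) + y) * Real.exp (-(k * y^2))
      = (∫ y : ℝ, (t - c) * Real.exp (-(k * y^2))) + ∫ y : ℝ, y * Real.exp (-(k * y^2)) := by
    rw [← integral_add hi1 hi2]; congr 1; ext y; ring
  rw [hsplit, integral_self_mul_gauss, add_zero, integral_const_mul]
  congr 1
  simpa [neg_mul] using integral_gaussian k

lemma subst_lemma {A γa t : ℝ} (hA : 0 < A) :
    ∫ s in (0:ℝ)..1,
        (t * Real.sqrt A / ((A + 2*γa^2*s^2) * Real.sqrt (A + 2*γa^2*s^2)))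
          * Real.exp (-(t * s / Real.sqrt (A * (A + 2*γa^2*s^2)))^2)
      = ∫ r in (0:ℝ)..(t / Real.sqrt (A * (A + 2*γa^2))), Real.exp (-r^2) := by
  set f : ℝ → ℝ := fun s => t * s / Real.sqrt (A * (A + 2*γa^2*s^2)) with hf
  set f' : ℝ → ℝ := fun s => t * Real.sqrt A / ((A + 2*γa^2*s^2) * Real.sqrt (A + 2*γa^2*s^2))
    with hf'
  have hQ : ∀ s : ℝ, 0 < A + 2*γa^2*s^2 := fun s => by positivity
  have hderiv : ∀ s ∈ Set.uIcc (0:ℝ) 1, HasDerivAt f (f' s) s := by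
    intro s _
    have h1 : HasDerivAt (fun x : ℝ => A + 2*γa^2*x^2) (4*γa^2*s) s := by
      have := ((hasDerivAt_pow 2 s).const_mul (2*γa^2)).const_add A
      refine this.congr_deriv ?_
      push_cast; ring
    have hw : HasDerivAt (fun x : ℝ => A * (A + 2*γa^2*x^2)) (A * (4*γa^2*s)) s :=
      h1.const_mul A
    have hwpos : 0 < A * (A + 2*γa^2*s^2) := by positivity
    have hv : HasDerivAt (fun x : ℝ => Real.sqrt (A * (A + 2*γa^2*x^2)))
        (A * (4*γa^2*s) / (2 * Real.sqrt (A * (A + 2*γa^2*s^2)))) s := by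
      have h := (Real.hasDerivAt_sqrt hwpos.ne').comp s hw
      refine h.congr_deriv ?_
      field_simp
    have hu : HasDerivAt (fun x : ℝ => t * x) t s := by
      simpa using (hasDerivAt_id s).const_mul t
    have hvne : Real.sqrt (A * (A + 2*γa^2*s^2)) ≠ 0 := by positivity
    have h := hu.div hv hvne
    refine h.congr_deriv ?_
    symm
    have hsplit : Real.sqrt (A * (A + 2*γa^2*s^2))
        = Real.sqrt A * Real.sqrt (A + 2*γa^2*s^2) := Real.sqrt_mul hA.le _
    simp only [hf']
    rw [hsplit]
    set sa := Real.sqrt A with hsa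
    set sq := Real.sqrt (A + 2*γa^2*s^2) with hsq
    have hA2 : sa ^ 2 = A := Real.sq_sqrt hA.le
    have hQ2 : sq ^ 2 = A + 2*γa^2*s^2 := Real.sq_sqrt (hQ s).le
    have hAne : sa ≠ 0 := by rw [hsa]; positivity
    have hQne : sq ≠ 0 := by rw [hsq]; positivity
    field_simp
    linear_combination (2*t*sa^2*sq^2 - 4*t*γa^2*s^2*(A + 2*γa^2*s^2)) * hA2 + (-(4*t*γa^2*s^2*sa^2)) * hQ2
  have hcont : ContinuousOn f' (Set.uIcc (0:ℝ) 1) := by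
    apply ContinuousOn.div continuousOn_const
    · exact (Continuous.continuousOn (by continuity)).mul
        (Continuous.continuousOn (by fun_prop))
    · intro s _
      have := hQ s
      positivity
  have hg : Continuous fun r : ℝ => Real.exp (-r^2) := by continuity
  have key := intervalIntegral.integral_comp_smul_deriv hderiv hcont hg
  simp only [smul_eq_mul, Function.comp] at key
  rw [hf] at key
  norm_num at key
  convert key using 2

lemma integral_gaussianReal_eq {v : ℝ≥0} (g : ℝ → ℝ) (hv : v ≠ 0) :
    ∫ x, g x ∂(gaussianReal 0 v) = ∫ x, gaussianPDFReal 0 v x * g x := by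
  rw [gaussianReal_of_var_ne_zero 0 hv]
  have hmeas : Measurable fun x => (gaussianPDFReal 0 v x).toNNReal :=
    (measurable_gaussianPDFReal 0 v).real_toNNReal
  have : (gaussianPDF 0 v) = fun x => ((gaussianPDFReal 0 v x).toNNReal : ℝ≥0∞) := by
    ext x; rw [gaussianPDF_def]; rfl
  rw [this, integral_withDensity_eq_integral_smul hmeas]
  congr 1
  ext x
  rw [NNReal.smul_def, smul_eq_mul, Real.coe_toNNReal _ (gaussianPDFReal_nonneg 0 v x)]

/-- For a centered Gaussian `G` with variance `γ²`,
`E[erf(t+G)·erf′(t+G)] = (1/√(1+2γ²))·erf(t/√((1+4γ²)(1+2γ²)))·erf′(t/√(1+2γ²))`. -/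
theorem stmt19 (γ t : ℝ) (hγ : 0 < γ)
    {Ω : Type*} [MeasurableSpace Ω] (P : Measure Ω) [IsProbabilityMeasure P]
    (G : Ω → ℝ) (hGmeas : Measurable G)
    (hG : Measure.map G P = gaussianReal 0 (γ ^ 2).toNNReal) :
    ∫ ω, erf (t + G ω) * erf' (t + G ω) ∂P
      = 1 / Real.sqrt (1 + 2 * γ ^ 2)
          * erf (t / Real.sqrt ((1 + 4 * γ ^ 2) * (1 + 2 * γ ^ 2)))
          * erf' (t / Real.sqrt (1 + 2 * γ ^ 2)) := by
  have hπ : (0:ℝ) < Real.pi := Real.pi_pos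
  have hg_cont : Continuous fun x : ℝ => erf (t + x) * erf' (t + x) := by
    have h1 : Continuous erf := by
      unfold erf
      apply continuous_const.mul
      exact (intervalIntegral.continuous_primitive
        (fun a b => Continuous.intervalIntegrable (by continuity) a b) 0)
    have h2 : Continuous erf' := by unfold erf'; fun_prop
    fun_prop
  have hvne : (γ ^ 2).toNNReal ≠ 0 := by
    simp only [ne_eq, Real.toNNReal_eq_zero, not_le]
    positivity
  -- Step 1: reduce to Lebesgue integral with Gaussian pdf
  have step1 : ∫ ω, erf (t + G ω) * erf' (t + G ω) ∂P
      = ∫ x, gaussianPDFReal 0 (γ^2).toNNReal x * (erf (t + x) * erf' (t + x)) := by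
    rw [← integral_map hGmeas.aemeasurable hg_cont.aestronglyMeasurable, hG,
      integral_gaussianReal_eq _ hvne]
  rw [step1]
  -- some constants
  set c0 : ℝ := (Real.sqrt (2*Real.pi*γ^2))⁻¹ with hc0
  set F : ℝ → ℝ → ℝ := fun x s =>
    c0 * Real.exp (-((2*γ^2)⁻¹ * x^2)) * ((t+x) * Real.exp (-((1+s^2)*(t+x)^2))) with hF
  -- Step 2: pointwise rewrite into double integral form
  have h4 : (2/Real.sqrt Real.pi) * (2/Real.sqrt Real.pi) = 4/Real.pi := by
    rw [div_mul_div_comm, Real.mul_self_sqrt hπ.le]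
    norm_num
  have step2 : ∀ x : ℝ, gaussianPDFReal 0 (γ^2).toNNReal x * (erf (t + x) * erf' (t + x))
      = (4/Real.pi) * ∫ s in (0:ℝ)..1, F x s := by
    intro x
    rw [gaussianPDFReal_def, erf_eq_param, erf']
    simp only [Real.coe_toNNReal _ (sq_nonneg γ), sub_zero]
    rw [← intervalIntegral.integral_const_mul (4/Real.pi) (F x)]
    have hC : (√(2*Real.pi*γ^2))⁻¹ * Real.exp (-x^2/(2*γ^2))
        * ((2/Real.sqrt Real.pi * ∫ s in (0:ℝ)..1, (t+x) * Real.exp (-(s*(t+x))^2))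
            * (2/Real.sqrt Real.pi * Real.exp (-(t+x)^2)))
        = ∫ s in (0:ℝ)..1,
            ((√(2*Real.pi*γ^2))⁻¹ * Real.exp (-x^2/(2*γ^2))
              * ((2/Real.sqrt Real.pi) * (2/Real.sqrt Real.pi)) * Real.exp (-(t+x)^2))
              * ((t+x) * Real.exp (-(s*(t+x))^2)) := by
      rw [intervalIntegral.integral_const_mul
        ((√(2*Real.pi*γ^2))⁻¹ * Real.exp (-x^2/(2*γ^2))
          * ((2/Real.sqrt Real.pi) * (2/Real.sqrt Real.pi)) * Real.exp (-(t+x)^2))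
        (fun s => (t+x) * Real.exp (-(s*(t+x))^2))]
      ring
    rw [hC]
    apply intervalIntegral.integral_congr
    intro s _
    simp only [hF]
    have e1 : Real.exp (-x^2/(2*γ^2)) * Real.exp (-(t+x)^2) * Real.exp (-(s*(t+x))^2)
        = Real.exp (-((2*γ^2)⁻¹ * x^2)) * Real.exp (-((1+s^2)*(t+x)^2)) := by
      rw [← Real.exp_add, ← Real.exp_add, ← Real.exp_add]
      congr 1
      field_simp
      ring
    linear_combination ((√(2*Real.pi*γ^2))⁻¹ * Real.exp (-(t+x)^2) * (t+x)
          * Real.exp (-(s*(t+x))^2) * Real.exp (-x^2/(2*γ^2))) * h4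
      + ((4/Real.pi) * c0 * (t+x)) * e1
  simp only [step2]
  rw [integral_const_mul]
  simp only [intervalIntegral.integral_of_le (zero_le_one)]
  -- positivity facts
  have hγ2 : (0:ℝ) < 2*γ^2 := by positivity
  have hb : (0:ℝ) < (2*γ^2)⁻¹ := by positivity
  set A : ℝ := 1 + 2*γ^2 with hA_def
  have hA : 0 < A := by rw [hA_def]; positivity
  -- Step 3 : Fubini
  have hFcont : Continuous (fun z : ℝ × ℝ => F z.1 z.2) := by
    simp only [hF]; fun_prop
  have hbound : ∀ z : ℝ × ℝ, ‖F z.1 z.2‖ ≤ c0 * Real.exp (-((2*γ^2)⁻¹ * z.1^2)) * 1 := by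
    rintro ⟨x, s⟩
    simp only [hF, norm_mul, Real.norm_eq_abs, mul_one]
    have hc0nn : (0:ℝ) ≤ c0 := by rw [hc0]; positivity
    rw [abs_of_nonneg hc0nn, abs_of_nonneg (Real.exp_pos _).le, abs_of_nonneg (Real.exp_pos _).le]
    have h1 : |t + x| * Real.exp (-((1+s^2)*(t+x)^2)) ≤ 1 := by
      have hmono : Real.exp (-((1+s^2)*(t+x)^2)) ≤ Real.exp (-(t+x)^2) := by
        apply Real.exp_le_exp.2
        nlinarith [sq_nonneg s, sq_nonneg (t+x), sq_nonneg (s*(t+x))]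
      calc |t + x| * Real.exp (-((1+s^2)*(t+x)^2)) ≤ |t + x| * Real.exp (-(t+x)^2) :=
            mul_le_mul_of_nonneg_left hmono (abs_nonneg _)
        _ ≤ 1 := abs_mul_exp_neg_sq_le (t+x)
    calc c0 * Real.exp (-((2*γ^2)⁻¹ * x^2)) * (|t + x| * Real.exp (-((1+s^2)*(t+x)^2)))
        ≤ c0 * Real.exp (-((2*γ^2)⁻¹ * x^2)) * 1 := by
          apply mul_le_mul_of_nonneg_left h1; positivity
      _ = c0 * Real.exp (-((2*γ^2)⁻¹ * x^2)) := mul_one _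
  have hdom : Integrable (fun z : ℝ × ℝ => (c0 * Real.exp (-((2*γ^2)⁻¹ * z.1^2))) * 1)
      ((volume : Measure ℝ).prod (volume.restrict (Set.Ioc (0:ℝ) 1))) := by
    have h1 : Integrable (fun x : ℝ => c0 * Real.exp (-((2*γ^2)⁻¹ * x^2))) := by
      have := (integrable_exp_neg_mul_sq hb).const_mul c0
      simpa [neg_mul] using this
    exact Integrable.mul_prod (f := fun x : ℝ => c0 * Real.exp (-((2*γ^2)⁻¹ * x^2)))
      (g := fun _ : ℝ => (1:ℝ)) h1 (integrable_const 1)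
  have hFint : Integrable (fun z : ℝ × ℝ => F z.1 z.2)
      ((volume : Measure ℝ).prod (volume.restrict (Set.Ioc (0:ℝ) 1))) := by
    apply hdom.mono' (hFcont.aestronglyMeasurable)
    exact Filter.Eventually.of_forall fun z => by simpa using hbound z
  rw [MeasureTheory.integral_integral_swap hFint]
  -- Step 4 : inner Gaussian integral, and Step 5: pointwise identity
  have step45 : ∀ s : ℝ, (∫ x : ℝ, F x s)
      = Real.exp (-(t^2/A)) * (Real.sqrt A)⁻¹ *
          ((t * Real.sqrt A / ((A + 2*γ^2*s^2) * Real.sqrt (A + 2*γ^2*s^2)))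
            * Real.exp (-(t * s / Real.sqrt (A * (A + 2*γ^2*s^2)))^2)) := by
    intro s
    set k : ℝ := 1 + s^2 + (2*γ^2)⁻¹ with hk_def
    have hk : 0 < k := by rw [hk_def]; positivity
    set Q : ℝ := A + 2*γ^2*s^2 with hQ_def
    have hQ : 0 < Q := by rw [hQ_def]; positivity
    have hkQ : k = Q * (2*γ^2)⁻¹ := by
      rw [hk_def, hQ_def, hA_def]; field_simp; ring
    set c : ℝ := (1+s^2)*t/k with hc_def
    set D : ℝ := (1+s^2)*(2*γ^2)⁻¹*t^2/k with hD_def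
    have hptw : ∀ x : ℝ, F x s = (c0 * Real.exp (-D)) * ((t+x) * Real.exp (-(k*(x+c)^2))) := by
      intro x
      have e2 : Real.exp (-((2*γ^2)⁻¹ * x^2)) * Real.exp (-((1+s^2)*(t+x)^2))
          = Real.exp (-D) * Real.exp (-(k*(x+c)^2)) := by
        rw [← Real.exp_add, ← Real.exp_add]
        congr 1
        rw [hD_def, hc_def, hk_def]
        field_simp
        ring
      simp only [hF]
      linear_combination (c0 * (t+x)) * e2
    rw [show (fun x : ℝ => F x s) = fun x : ℝ =>
        (c0 * Real.exp (-D)) * ((t+x) * Real.exp (-(k*(x+c)^2))) from funext hptw]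
    rw [integral_const_mul, integral_shifted hk c t]
    -- Step 5 algebra
    have htc : t - c = t / Q := by
      rw [hc_def, hkQ]
      field_simp
      ring
    have hsqrtQ : (0:ℝ) < Real.sqrt Q := Real.sqrt_pos.2 hQ
    have hb2 : c0 * Real.sqrt (Real.pi / k) = (Real.sqrt Q)⁻¹ := by
      rw [hc0, ← Real.sqrt_inv, ← Real.sqrt_mul (by positivity) (Real.pi / k), ← Real.sqrt_inv]
      congr 1
      rw [hkQ]
      field_simp
    have hexp : Real.exp (-D)
        = Real.exp (-(t^2/A)) * Real.exp (-(t * s / Real.sqrt (A * Q))^2) := by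
      rw [← Real.exp_add]
      congr 1
      have hAQ : Real.sqrt (A * Q) ^ 2 = A * Q := Real.sq_sqrt (by positivity)
      rw [hD_def, hkQ, div_pow, hAQ, hQ_def, hA_def]
      field_simp
      ring
    have hsA : Real.sqrt A ≠ 0 := by positivity
    have h1A : Real.sqrt A * (Real.sqrt A)⁻¹ = 1 := mul_inv_cancel₀ hsA
    rw [htc, hexp, div_eq_mul_inv (t * Real.sqrt A), mul_inv]
    linear_combination (Real.exp (-(t^2/A)) * Real.exp (-(t*s/Real.sqrt (A*Q))^2) * (t/Q)) * hb2
      - (Real.exp (-(t^2/A)) * Real.exp (-(t*s/Real.sqrt (A*Q))^2) * (t/Q)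
          * (Real.sqrt Q)⁻¹) * h1A
  simp only [step45]
  rw [integral_const_mul, ← intervalIntegral.integral_of_le (zero_le_one), subst_lemma hA]
  -- Final step : identify with the RHS
  rw [erf, erf']
  have hend : Real.sqrt ((1 + 4*γ^2) * A) = Real.sqrt (A * (A + 2*γ^2)) := by
    congr 1
    rw [hA_def]; ring
  have hexp2 : Real.exp (-(t / Real.sqrt A)^2) = Real.exp (-(t^2/A)) := by
    congr 1
    rw [div_pow, Real.sq_sqrt hA.le]
  rw [hend, hexp2, one_div]
  linear_combination (-(Real.exp (-(t^2/A)) * (Real.sqrt A)⁻¹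
    * (∫ r in (0:ℝ)..(t / Real.sqrt (A * (A + 2*γ^2))), Real.exp (-r^2)))) * h4
end
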